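/- Let N ≥ 2, T > 0, and let u : (0,T) × ℝ^N → ℝ^N be continuously differentiable with div u = 0 everywhere. Let X_1, …, X_{N−1} : (0,T) × ℝ^N → ℝ^N be continuously differentiable vector fields each satisfying ∂_t X_i + (u·∇)X_i = (X_i·∇)u pointwise. Define W : (0,T) × ℝ^N → ℝ^N by the requirement W(t,x)·e = det(X_1(t,x), …, X_{N−1}(t,x), e) for every e ∈ ℝ^N. Then W satisfies pointwise ∂_t W + (u·∇)W = −(∇u)^T W, i.e. componentwise ∂_t W^k + Σ_j u^j ∂_j W^k + Σ_j (∂_k u^j) W^j = 0. -/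

import Mathlib

open RealInnerProductSpace

/-- Partial derivative in the `i`-th coordinate direction of a scalar function on `ℝ^N`. -/
noncomputable def pd {N : ℕ} (i : Fin N) (f : EuclideanSpace ℝ (Fin N) → ℝ)
    (x : EuclideanSpace ℝ (Fin N)) : ℝ :=
  fderiv ℝ f x (EuclideanSpace.single i 1)

section DetAux

open scoped Matrix

variable {N : ℕ}

lemma detRow_bound (v : Fin N → Fin N → ℝ) :
    ‖Matrix.detRowAlternating (R := ℝ) (n := Fin N) v‖ ≤ (N.factorial : ℝ) * ∏ i, ‖v i‖ := by
  have h0 : Matrix.detRowAlternating (R := ℝ) (n := Fin N) v = (Matrix.of v).det := rfl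
  rw [h0, Matrix.det_apply]
  calc ‖∑ σ : Equiv.Perm (Fin N), Equiv.Perm.sign σ • ∏ i, Matrix.of v (σ i) i‖
      ≤ ∑ σ : Equiv.Perm (Fin N), ‖Equiv.Perm.sign σ • ∏ i, Matrix.of v (σ i) i‖ :=
        norm_sum_le _ _
    _ ≤ ∑ _σ : Equiv.Perm (Fin N), ∏ i, ‖v i‖ := by
        refine Finset.sum_le_sum fun σ _ => ?_
        have h1 : ‖Equiv.Perm.sign σ • ∏ i, Matrix.of v (σ i) i‖ = ‖∏ i, v (σ i) i‖ := by
          rcases Int.units_eq_one_or (Equiv.Perm.sign σ) with h | h <;>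
            simp [h, Matrix.of_apply]
        rw [h1, norm_prod]
        have h2 : ∏ i, ‖v (σ i) i‖ ≤ ∏ i, ‖v (σ i)‖ :=
          Finset.prod_le_prod (fun i _ => norm_nonneg _)
            (fun i _ => norm_le_pi_norm (v (σ i)) i)
        calc ∏ i, ‖v (σ i) i‖ ≤ ∏ i, ‖v (σ i)‖ := h2
          _ = ∏ i, ‖v i‖ := Equiv.prod_comp σ (fun i => ‖v i‖)
    _ = (N.factorial : ℝ) * ∏ i, ‖v i‖ := by
        rw [Finset.sum_const, nsmul_eq_mul]
        congr 1
        simp [Fintype.card_perm]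

noncomputable def detCML (N : ℕ) : ContinuousMultilinearMap ℝ (fun _ : Fin N => (Fin N → ℝ)) ℝ :=
  MultilinearMap.mkContinuous
    (Matrix.detRowAlternating : AlternatingMap ℝ (Fin N → ℝ) ℝ (Fin N)).toMultilinearMap
    (N.factorial) (fun v => detRow_bound v)

lemma detCML_apply (v : Fin N → Fin N → ℝ) : detCML N v = (Matrix.of v).det := rfl

lemma key_row (A M : Matrix (Fin N) (Fin N) ℝ) :
    ∑ j, (M.updateRow j (A *ᵥ M j)).det = A.trace * M.det := by
  have hcr : ∀ (j : Fin N) (b : Fin N → ℝ),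
      Matrix.cramer Mᵀ b j = ∑ p, b p * Matrix.adjugate M p j := by
    intro j b
    have hb : b = ∑ p, b p • (Pi.single p 1 : Fin N → ℝ) := by
      funext q
      simp [Pi.single_apply, Finset.sum_apply]
    conv_lhs => rw [hb]
    rw [map_sum]
    rw [Finset.sum_apply]
    refine Finset.sum_congr rfl fun p _ => ?_
    rw [map_smul, Pi.smul_apply, smul_eq_mul]
    rw [Matrix.adjugate_def]
    rfl
  have h2 : ∀ p m, ∑ j, Matrix.adjugate M p j * M j m
      = M.det * (if p = m then (1:ℝ) else 0) := by
    intro p m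
    have := congrFun (congrFun (Matrix.adjugate_mul M) p) m
    simpa [Matrix.mul_apply, Matrix.one_apply, mul_ite] using this
  calc ∑ j, (M.updateRow j (A *ᵥ M j)).det
      = ∑ j, Matrix.cramer Mᵀ (A *ᵥ M j) j := by
        refine Finset.sum_congr rfl fun j _ => ?_
        rw [Matrix.cramer_transpose_apply]
    _ = ∑ j, ∑ p, (∑ m, A p m * M j m) * Matrix.adjugate M p j := by
        refine Finset.sum_congr rfl fun j _ => ?_
        rw [hcr]
        refine Finset.sum_congr rfl fun p _ => ?_
        simp [Matrix.mulVec, dotProduct]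
    _ = ∑ p, ∑ m, A p m * ∑ j, Matrix.adjugate M p j * M j m := by
        rw [Finset.sum_comm]
        refine Finset.sum_congr rfl fun p _ => ?_
        simp_rw [Finset.sum_mul, Finset.mul_sum]
        rw [Finset.sum_comm]
        exact Finset.sum_congr rfl fun m _ => Finset.sum_congr rfl fun j _ => by ring
    _ = ∑ p, ∑ m, A p m * (M.det * (if p = m then (1:ℝ) else 0)) := by
        refine Finset.sum_congr rfl fun p _ => Finset.sum_congr rfl fun m _ => ?_
        rw [h2]
    _ = A.trace * M.det := by
        simp [mul_ite, mul_zero, mul_one, Finset.sum_ite_eq, Matrix.trace, Matrix.diag,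
          Finset.sum_mul]

lemma key_delta (A : Matrix (Fin N) (Fin N) ℝ) (v : Fin N → Fin N → ℝ) :
    ∑ j, detCML N (Function.update v j (A *ᵥ v j)) = A.trace * detCML N v := by
  have h : ∀ (j : Fin N) (b : Fin N → ℝ),
      detCML N (Function.update v j b) = ((Matrix.of v).updateRow j b).det := fun j b => rfl
  simp_rw [h, detCML_apply]
  exact key_row A (Matrix.of v)

end DetAux

open scoped Matrix

/-- Let `u` be divergence-free and let `X_1, …, X_{N−1}` solve
`∂_t X_i + (u·∇)X_i = (X_i·∇)u`. If `W` is defined by `W·e = det(X_1, …, X_{N−1}, e)`,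
then `∂_t W + (u·∇)W = −(∇u)ᵀ W`. -/
theorem wedge_transport_equation (N : ℕ) (hN : 2 ≤ N) (T : ℝ) (hT : 0 < T)
    (u : ℝ → EuclideanSpace ℝ (Fin N) → EuclideanSpace ℝ (Fin N))
    (X : Fin (N - 1) → ℝ → EuclideanSpace ℝ (Fin N) → EuclideanSpace ℝ (Fin N))
    (W : ℝ → EuclideanSpace ℝ (Fin N) → EuclideanSpace ℝ (Fin N))
    (hu : ContDiffOn ℝ 1 (fun p : ℝ × EuclideanSpace ℝ (Fin N) => u p.1 p.2)
      (Set.Ioo 0 T ×ˢ Set.univ))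
    (hX : ∀ l, ContDiffOn ℝ 1 (fun p : ℝ × EuclideanSpace ℝ (Fin N) => X l p.1 p.2)
      (Set.Ioo 0 T ×ˢ Set.univ))
    -- incompressibility: div u = 0
    (hdiv : ∀ t ∈ Set.Ioo (0:ℝ) T, ∀ x, ∑ i, pd i (fun y => u t y i) x = 0)
    -- each X_l solves the transported vector-field equation ∂_t X + (u·∇)X = (X·∇)u
    (htr : ∀ l, ∀ t ∈ Set.Ioo (0:ℝ) T, ∀ x, ∀ j : Fin N,
      deriv (fun s => X l s x j) t + ∑ k, u t x k * pd k (fun y => X l t y j) x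
        = ∑ k, X l t x k * pd k (fun y => u t y j) x)
    -- W is defined by the requirement W(t,x)·e = det(X_1(t,x), …, X_{N−1}(t,x), e)
    (hW : ∀ t ∈ Set.Ioo (0:ℝ) T, ∀ x, ∀ e : EuclideanSpace ℝ (Fin N),
      ⟪W t x, e⟫ = Matrix.det (Matrix.of fun i j : Fin N =>
        if h : (j : ℕ) < N - 1 then X ⟨j, h⟩ t x i else e i)) :
    ∀ t ∈ Set.Ioo (0:ℝ) T, ∀ x, ∀ k : Fin N,
      deriv (fun s => W s x k) t + ∑ j, u t x j * pd j (fun y => W t y k) x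
        + ∑ j, pd k (fun y => u t y j) x * W t x j = 0 := by
  intro t ht x k
  have hlastlt : N - 1 < N := by omega
  set jl : Fin N := ⟨N - 1, hlastlt⟩ with hjl
  have hmem : (Set.Ioo (0:ℝ) T ×ˢ (Set.univ : Set (EuclideanSpace ℝ (Fin N)))) ∈
      nhds ((t, x) : ℝ × EuclideanSpace ℝ (Fin N)) :=
    (isOpen_Ioo.prod isOpen_univ).mem_nhds ⟨ht, trivial⟩
  have hXd : ∀ l, DifferentiableAt ℝ
      (fun p : ℝ × EuclideanSpace ℝ (Fin N) => X l p.1 p.2) (t, x) :=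
    fun l => ((hX l).differentiableOn one_ne_zero).differentiableAt hmem
  set D : Fin (N - 1) → (ℝ × EuclideanSpace ℝ (Fin N)) →L[ℝ] EuclideanSpace ℝ (Fin N) :=
    fun l => fderiv ℝ (fun p : ℝ × EuclideanSpace ℝ (Fin N) => X l p.1 p.2) (t, x) with hDdef
  have hDX : ∀ l, HasFDerivAt (fun p : ℝ × EuclideanSpace ℝ (Fin N) => X l p.1 p.2)
      (D l) (t, x) := fun l => (hXd l).hasFDerivAt
  have hcurt : HasFDerivAt (fun s : ℝ => ((s, x) : ℝ × EuclideanSpace ℝ (Fin N)))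
      ((ContinuousLinearMap.id ℝ ℝ).prod 0) t :=
    HasFDerivAt.prodMk (hasFDerivAt_id t) (hasFDerivAt_const x t)
  have hcurx : HasFDerivAt
      (fun y : EuclideanSpace ℝ (Fin N) => ((t, y) : ℝ × EuclideanSpace ℝ (Fin N)))
      ((0 : EuclideanSpace ℝ (Fin N) →L[ℝ] ℝ).prod (ContinuousLinearMap.id ℝ _)) x :=
    HasFDerivAt.prodMk (hasFDerivAt_const t x) (hasFDerivAt_id x)
  have hXt : ∀ l (j' : Fin N), deriv (fun s => X l s x j') t = D l (1, 0) j' := by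
    intro l j'
    have h1 : HasFDerivAt (fun s : ℝ => X l s x)
        ((D l).comp ((ContinuousLinearMap.id ℝ ℝ).prod 0)) t := by have := (hDX l).comp t hcurt; exact this
    have h2 : HasFDerivAt (fun s : ℝ => X l s x j')
        ((EuclideanSpace.proj j').comp ((D l).comp ((ContinuousLinearMap.id ℝ ℝ).prod 0))) t :=
      (EuclideanSpace.proj j' : EuclideanSpace ℝ (Fin N) →L[ℝ] ℝ).hasFDerivAt.comp t h1
    rw [h2.hasDerivAt.deriv]
    simp
  have hXs : ∀ l (m j' : Fin N), pd m (fun y => X l t y j') x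
      = D l (0, EuclideanSpace.single m 1) j' := by
    intro l m j'
    have h1 : HasFDerivAt (fun y : EuclideanSpace ℝ (Fin N) => X l t y)
        ((D l).comp ((0 : _ →L[ℝ] ℝ).prod (ContinuousLinearMap.id ℝ _))) x :=
      (hDX l).comp x hcurx
    have h2 : HasFDerivAt (fun y : EuclideanSpace ℝ (Fin N) => X l t y j')
        ((EuclideanSpace.proj j').comp
          ((D l).comp ((0 : _ →L[ℝ] ℝ).prod (ContinuousLinearMap.id ℝ _)))) x :=
      (EuclideanSpace.proj j' : EuclideanSpace ℝ (Fin N) →L[ℝ] ℝ).hasFDerivAt.comp x h1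
    show fderiv ℝ (fun y => X l t y j') x (EuclideanSpace.single m 1) = _
    rw [h2.fderiv]
    simp
  have hbasis : ∀ v : EuclideanSpace ℝ (Fin N),
      ∑ m, v m • EuclideanSpace.single m (1:ℝ) = v := by
    intro v
    ext i
    rw [WithLp.ofLp_sum, Finset.sum_apply]
    simp [EuclideanSpace.single_apply]
  set A : Matrix (Fin N) (Fin N) ℝ :=
    Matrix.of fun j' m => pd m (fun y => u t y j') x with hAdef
  have htrA : A.trace = 0 := by
    have h := hdiv t ht x
    simpa [Matrix.trace, Matrix.diag, hAdef] using h
  set cols : Fin N → (ℝ × EuclideanSpace ℝ (Fin N)) → (Fin N → ℝ) :=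
    fun j p => if h : (j : ℕ) < N - 1 then (fun j' => X ⟨j, h⟩ p.1 p.2 j')
      else (fun i => if i = k then 1 else 0) with hcolsdef
  set colD : Fin N → (ℝ × EuclideanSpace ℝ (Fin N)) →L[ℝ] (Fin N → ℝ) :=
    fun j => if h : (j : ℕ) < N - 1 then
        ContinuousLinearMap.pi (fun j' => (EuclideanSpace.proj j').comp (D ⟨j, h⟩))
      else 0 with hcolDdef
  have hcder : ∀ j, HasFDerivAt (cols j) (colD j) (t, x) := by
    intro j
    by_cases h : (j : ℕ) < N - 1
    · simp only [hcolsdef, hcolDdef, dif_pos h]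
      refine hasFDerivAt_pi.2 fun j' => ?_
      exact (EuclideanSpace.proj j' : EuclideanSpace ℝ (Fin N) →L[ℝ] ℝ).hasFDerivAt.comp _
        (hDX ⟨j, h⟩)
    · simp only [hcolsdef, hcolDdef, dif_neg h]
      exact hasFDerivAt_const _ _
  set cols₀ : Fin N → Fin N → ℝ := fun j => cols j (t, x) with hcols₀
  set G' : (ℝ × EuclideanSpace ℝ (Fin N)) →L[ℝ] ℝ :=
    ((detCML N).linearDeriv cols₀).comp (ContinuousLinearMap.pi colD) with hG'def
  have hGd : HasFDerivAt (fun p : ℝ × EuclideanSpace ℝ (Fin N) => detCML N (fun j => cols j p))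
      G' (t, x) :=
    ((detCML N).hasFDerivAt cols₀).comp (t, x) (hasFDerivAt_pi.2 hcder)
  have hG'app : ∀ v, G' v = ∑ j, detCML N (Function.update cols₀ j (colD j v)) := by
    intro v
    simp [hG'def]
  have hdetform : ∀ s ∈ Set.Ioo (0:ℝ) T, ∀ (y : EuclideanSpace ℝ (Fin N))
      (e : EuclideanSpace ℝ (Fin N)),
      detCML N (fun j => if h : (j : ℕ) < N - 1 then (fun j' => X ⟨j, h⟩ s y j')
        else (fun i => e i)) = ⟪W s y, e⟫ := by
    intro s hs y e
    rw [hW s hs y e, detCML_apply, ← Matrix.det_transpose]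
    congr 1
    ext i j
    by_cases h : (j : ℕ) < N - 1 <;> simp [Matrix.transpose_apply, h]
  have hWG : ∀ s ∈ Set.Ioo (0:ℝ) T, ∀ y, detCML N (fun j => cols j (s, y)) = W s y k := by
    intro s hs y
    have h1 := hdetform s hs y (EuclideanSpace.single k 1)
    have h2 : (fun j => cols j (s, y)) = (fun j : Fin N => if h : (j : ℕ) < N - 1
        then (fun j' => X ⟨j, h⟩ s y j')
        else (fun i => (EuclideanSpace.single k (1:ℝ)) i)) := by
      funext j
      by_cases h : (j : ℕ) < N - 1 <;> simp [hcolsdef, h, EuclideanSpace.single_apply]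
    rw [h2, h1]
    simp [EuclideanSpace.inner_single_right]
  have hWcoord : ∀ (e : EuclideanSpace ℝ (Fin N)),
      detCML N (Function.update cols₀ jl (fun i => e i)) = ⟪W t x, e⟫ := by
    intro e
    rw [← hdetform t ht x e]
    congr 1
    funext j
    by_cases h : (j : ℕ) < N - 1
    · have hne : j ≠ jl := by
        intro hh
        rw [hh, hjl] at h
        simp at h
      rw [Function.update_of_ne hne]
      simp [hcols₀, hcolsdef, h]
    · have hne : ¬ ((jl : ℕ) < N - 1) := by simp [hjl]
      have hj : j = jl := by
        apply Fin.ext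
        have := j.isLt
        rw [hjl]
        simp
        omega
      rw [hj, Function.update_self, dif_neg hne]
  have hlastne : ¬ ((jl : ℕ) < N - 1) := by simp [hjl]
  have hWval : ∀ j : Fin N,
      detCML N (Function.update cols₀ jl (Pi.single j 1 : Fin N → ℝ)) = W t x j := by
    intro j
    have h1 := hWcoord (EuclideanSpace.single j 1)
    have h2 : (fun i => (EuclideanSpace.single j (1:ℝ)) i) = (Pi.single j 1 : Fin N → ℝ) := by
      funext i
      simp [EuclideanSpace.single_apply, Pi.single_apply]
    rw [h2] at h1
    rw [h1]
    simp [EuclideanSpace.inner_single_right]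
  have hDW : deriv (fun s => W s x k) t = G' (1, 0) := by
    have hev : (fun s => W s x k) =ᶠ[nhds t] fun s => detCML N (fun j => cols j (s, x)) := by
      filter_upwards [isOpen_Ioo.mem_nhds ht] with s hs
      exact (hWG s hs x).symm
    rw [hev.deriv_eq]
    have h1 : HasFDerivAt (fun s : ℝ => detCML N (fun j => cols j (s, x)))
        (G'.comp ((ContinuousLinearMap.id ℝ ℝ).prod 0)) t := by have := hGd.comp t hcurt; exact this
    rw [h1.hasDerivAt.deriv]
    simp
  have hpdW : ∀ m, pd m (fun y => W t y k) x = G' (0, EuclideanSpace.single m 1) := by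
    intro m
    have hfun : (fun y => W t y k) = fun y => detCML N (fun j => cols j (t, y)) :=
      funext fun y => (hWG t ht y).symm
    show fderiv ℝ (fun y => W t y k) x (EuclideanSpace.single m 1) = _
    rw [hfun]
    have h1 : HasFDerivAt
        (fun y : EuclideanSpace ℝ (Fin N) => detCML N (fun j => cols j (t, y)))
        (G'.comp ((0 : _ →L[ℝ] ℝ).prod (ContinuousLinearMap.id ℝ _))) x := hGd.comp x hcurx
    rw [h1.fderiv]
    simp
  have hsum : (((1:ℝ), u t x) : ℝ × EuclideanSpace ℝ (Fin N))
      = ((1:ℝ), (0 : EuclideanSpace ℝ (Fin N)))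
      + ∑ m, u t x m • (((0:ℝ), EuclideanSpace.single m (1:ℝ)) :
          ℝ × EuclideanSpace ℝ (Fin N)) := by
    have h2 : ∑ m, u t x m • (((0:ℝ), EuclideanSpace.single m (1:ℝ)) :
          ℝ × EuclideanSpace ℝ (Fin N))
        = ∑ m, (((0:ℝ), u t x m • EuclideanSpace.single m (1:ℝ)) :
          ℝ × EuclideanSpace ℝ (Fin N)) := by
      refine Finset.sum_congr rfl fun m _ => ?_
      rw [Prod.smul_mk, smul_zero]
    rw [h2, ← prod_mk_sum, Prod.mk_add_mk]
    rw [Prod.mk.injEq]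
    constructor
    · simp
    · rw [hbasis (u t x), zero_add]
  have hcolDeval : ∀ (j : Fin N) (h : (j : ℕ) < N - 1),
      colD j (1, u t x) = A *ᵥ cols₀ j := by
    intro j h
    funext j'
    have e0 : colD j (1, u t x) j'
        = ((EuclideanSpace.proj j').comp (D ⟨j, h⟩)) (1, u t x) := by
      simp [hcolDdef, dif_pos h]
    set L : (ℝ × EuclideanSpace ℝ (Fin N)) →L[ℝ] ℝ :=
      (EuclideanSpace.proj j').comp (D ⟨j, h⟩) with hLdef
    have e1 : L (1, u t x) = L (1, 0) + ∑ m, u t x m * L (0, EuclideanSpace.single m 1) := by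
      rw [hsum, map_add, map_sum]
      simp only [map_smul, smul_eq_mul]
    have e2 : L (1, 0) = deriv (fun s => X ⟨j, h⟩ s x j') t := by
      rw [hXt]
      simp [hLdef]
    have e3 : ∀ m, L ((0:ℝ), EuclideanSpace.single m 1)
        = pd m (fun y => X ⟨j, h⟩ t y j') x := by
      intro m
      rw [hXs]
      simp [hLdef]
    rw [e0, e1, e2]
    simp_rw [e3]
    rw [htr ⟨j, h⟩ t ht x j']
    have e5 : (A *ᵥ cols₀ j) j' = ∑ m, pd m (fun y => u t y j') x * X ⟨j, h⟩ t x m := by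
      simp [hAdef, Matrix.mulVec, dotProduct, hcols₀, hcolsdef, dif_pos h,
        Matrix.of_apply]
    rw [e5]
    exact Finset.sum_congr rfl fun m _ => mul_comm _ _
  have hcols₀l : cols₀ jl = fun i => if i = k then (1:ℝ) else 0 := by
    simp [hcols₀, hcolsdef, dif_neg hlastne]
  have hAvl : A *ᵥ cols₀ jl
      = ∑ j, pd k (fun y => u t y j) x • (Pi.single j 1 : Fin N → ℝ) := by
    funext i
    rw [hcols₀l, Finset.sum_apply]
    simp [Matrix.mulVec, dotProduct, hAdef, Matrix.of_apply, Pi.single_apply,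
      mul_ite]
  have hlastterm : detCML N (Function.update cols₀ jl (A *ᵥ cols₀ jl))
      = ∑ j, pd k (fun y => u t y j) x * W t x j := by
    rw [hAvl]
    set L2 := (detCML N).toContinuousLinearMap cols₀ jl with hL2
    have happ : ∀ b : Fin N → ℝ, detCML N (Function.update cols₀ jl b) = L2 b := by
      intro b
      simp [hL2]
    rw [happ, map_sum]
    refine Finset.sum_congr rfl fun j _ => ?_
    rw [map_smul, smul_eq_mul, ← happ, hWval j]
  have hsplit : ∀ j : Fin N, detCML N (Function.update cols₀ j (A *ᵥ cols₀ j))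
      = detCML N (Function.update cols₀ j (colD j (1, u t x)))
        + (if j = jl then ∑ j', pd k (fun y => u t y j') x * W t x j' else 0) := by
    intro j
    by_cases h : (j : ℕ) < N - 1
    · have hne : j ≠ jl := by
        intro hh
        rw [hh] at h
        exact hlastne h
      rw [hcolDeval j h, if_neg hne, add_zero]
    · have hj : j = jl := by
        apply Fin.ext
        have := j.isLt
        rw [hjl]
        simp
        omega
      rw [hj, if_pos rfl, hlastterm]
      have h0 : colD jl (1, u t x) = 0 := by simp [hcolDdef, dif_neg hlastne]
      rw [h0]
      have hz : detCML N (Function.update cols₀ jl (0 : Fin N → ℝ)) = 0 :=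
        (detCML N).map_update_zero cols₀ jl
      rw [hz, zero_add]
  have hkey : G' (1, u t x) + ∑ j, pd k (fun y => u t y j) x * W t x j = 0 := by
    have h1 : ∑ j, detCML N (Function.update cols₀ j (A *ᵥ cols₀ j))
        = G' (1, u t x) + ∑ j, pd k (fun y => u t y j) x * W t x j := by
      rw [hG'app]
      rw [Finset.sum_congr rfl fun j _ => hsplit j]
      rw [Finset.sum_add_distrib]
      congr 1
      simp
    rw [← h1, key_delta A cols₀, htrA, zero_mul]
  have hlin : G' (1, u t x) = G' (1, 0) + ∑ m, u t x m * G' (0, EuclideanSpace.single m 1) := by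
    rw [hsum, map_add, map_sum]
    simp only [map_smul, smul_eq_mul]
  have hfin : deriv (fun s => W s x k) t + ∑ j, u t x j * pd j (fun y => W t y k) x
      = G' (1, u t x) := by
    rw [hDW, hlin]
    congr 1
    exact Finset.sum_congr rfl fun m _ => by rw [hpdW m]
  rw [hfin]
  exact hkey
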